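/- Let (G,d) be a countably generated nonarchimedean normed chain complex over K with finite boundary depth β. Then for every r ∈ (0,1) there exist closed subspaces D, B, C of G such that: (i) G = D ⊕ B ⊕ C, i.e. every x ∈ G is uniquely x = x_D + x_B + x_C with x_D ∈ D, x_B ∈ B, x_C ∈ C; (ii) the decomposition is r-orthogonal: ‖x‖ ≥ r·max(‖x_D‖, ‖x_B‖, ‖x_C‖) for all x ∈ G; (iii) ker d = B ⊕ C and B = d(D) = range d; (iv) d restricted to D is injective, and the induced inverse d⁻¹ : B → D satisfies ‖d⁻¹(y)‖ ≤ (1/r)·e^β·‖y‖ for all y ∈ B. -/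

import Mathlib

open scoped ENNReal

set_option linter.unusedSectionVars false

noncomputable def cseq (r : ℝ) : ℕ → ℝ
  | 0 => (1+r)/2
  | n+1 => (cseq r n + r)/2

lemma cseq_gt {r : ℝ} (hr0 : 0 < r) (hr1 : r < 1) : ∀ n, r < cseq r n
  | 0 => by simp only [cseq]; linarith
  | n+1 => by have := cseq_gt hr0 hr1 n; simp only [cseq]; linarith

lemma cseq_le_one {r : ℝ} (hr0 : 0 < r) (hr1 : r < 1) : ∀ n, cseq r n ≤ 1
  | 0 => by simp only [cseq]; linarith
  | n+1 => by have := cseq_le_one hr0 hr1 n; have := cseq_gt hr0 hr1 n; simp only [cseq]; linarith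

lemma cseq_pos {r : ℝ} (hr0 : 0 < r) (hr1 : r < 1) (n : ℕ) : 0 < cseq r n :=
  hr0.trans (cseq_gt hr0 hr1 n)

lemma cseq_succ_lt {r : ℝ} (hr0 : 0 < r) (hr1 : r < 1) (n : ℕ) : cseq r (n+1) < cseq r n := by
  have := cseq_gt hr0 hr1 n; simp only [cseq]; linarith

section Aux
variable {K : Type*} [NormedField K] {G : Type*} [NormedAddCommGroup G] [NormedSpace K G]
  [IsUltrametricDist G]

lemma norm_sub_le_max' (p q : G) : ‖p - q‖ ≤ max ‖p‖ ‖q‖ := by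
  rw [sub_eq_add_neg]; simpa using IsUltrametricDist.norm_add_le_max p (-q)

lemma mul_max_le {c A B S : ℝ} (hc : 0 ≤ c) (h1 : c * A ≤ S) (h2 : c * B ≤ S) :
    c * max A B ≤ S := by
  rw [mul_max_of_nonneg _ _ hc]; exact max_le h1 h2

lemma sum_snoc_eq {n : ℕ} (f : Fin n → G) (e : G) (a : Fin (n+1) → K) :
    ∑ i, a i • Fin.snoc f e i = (∑ i : Fin n, a i.castSucc • f i) + a (Fin.last n) • e := by
  rw [Fin.sum_univ_castSucc]; simp [Fin.snoc_castSucc, Fin.snoc_last]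

lemma range_snoc_subset {n : ℕ} (f : Fin n → G) (e : G) :
    Set.range f ⊆ Set.range (Fin.snoc f e) := by
  rintro - ⟨i, rfl⟩; exact ⟨i.castSucc, by simp [Fin.snoc_castSucc]⟩

/-- Invariant for the orthogonalization procedure. -/
def OrthInv (W : Submodule K G) (r : ℝ) (x : ℕ → G) (n : ℕ) (f : Fin n → G) : Prop :=
  (∀ w ∈ W, ∀ a : Fin n → K,
    cseq r n * max ‖w‖ ‖∑ i, a i • f i‖ ≤ ‖w + ∑ i, a i • f i‖) ∧
  (∀ i : Fin n, x i ∈ closure ((W ⊔ Submodule.span K (Set.range f) : Submodule K G) : Set G))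

lemma orthInv_zero (W : Submodule K G) {r : ℝ} (hr0 : 0 < r) (hr1 : r < 1) (x : ℕ → G) :
    OrthInv W r x 0 Fin.elim0 := by
  constructor
  · intro w hw a
    simp only [Finset.univ_eq_empty, Finset.sum_empty, norm_zero, add_zero]
    have h1 := cseq_le_one hr0 hr1 0
    have h0 := norm_nonneg w
    calc cseq r 0 * max ‖w‖ 0 = cseq r 0 * ‖w‖ := by rw [max_eq_left h0]
    _ ≤ 1 * ‖w‖ := by nlinarith
    _ = ‖w‖ := one_mul _
  · exact fun i => i.elim0

lemma orthInv_step (W : Submodule K G) {r : ℝ} (hr0 : 0 < r) (hr1 : r < 1) (x : ℕ → G)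
    (n : ℕ) (f : Fin n → G) (h : OrthInv W r x n f) :
    ∃ e : G, OrthInv W r x (n+1) (Fin.snoc f e) := by
  classical
  set V : Submodule K G := W ⊔ Submodule.span K (Set.range f) with hV
  have hVne : (V : Set G).Nonempty := ⟨0, V.zero_mem⟩
  set δ := Metric.infDist (x n) (V : Set G) with hδ
  have hc := cseq_pos hr0 hr1 n
  have hc' := cseq_pos hr0 hr1 (n+1)
  have hlt := cseq_succ_lt hr0 hr1 n
  have hone := cseq_le_one hr0 hr1 (n+1)
  -- generic second-component helper
  have hmem2 : ∀ e : G, ∀ i : Fin n, x i.castSucc ∈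
      closure ((W ⊔ Submodule.span K (Set.range (Fin.snoc f e)) : Submodule K G) : Set G) := by
    intro e i
    refine closure_mono ?_ (h.2 i)
    exact SetLike.coe_subset_coe.mpr
      (sup_le_sup_left (Submodule.span_mono (range_snoc_subset f e)) W)
  by_cases hδ0 : δ ≤ 0
  · -- x n is in the closure of V already; take e = 0
    refine ⟨0, ?_, ?_⟩
    · intro w hw a
      rw [sum_snoc_eq]
      simp only [smul_zero, add_zero]
      calc cseq r (n+1) * max ‖w‖ ‖∑ i : Fin n, a i.castSucc • f i‖
          ≤ cseq r n * max ‖w‖ ‖∑ i : Fin n, a i.castSucc • f i‖ := by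
            have : (0:ℝ) ≤ max ‖w‖ ‖∑ i : Fin n, a i.castSucc • f i‖ :=
              le_max_of_le_left (norm_nonneg w)
            nlinarith
        _ ≤ _ := h.1 w hw _
    · intro i
      refine Fin.lastCases ?_ (fun i => hmem2 0 i) i
      have hx : x n ∈ closure (V : Set G) := by
        rw [Metric.mem_closure_iff_infDist_zero hVne]
        exact le_antisymm hδ0 Metric.infDist_nonneg
      refine closure_mono ?_ hx
      exact SetLike.coe_subset_coe.mpr
        (sup_le_sup_left (Submodule.span_mono (range_snoc_subset f 0)) W)
  · push_neg at hδ0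
    have ht1 : cseq r (n+1) / cseq r n < 1 := (div_lt_one hc).mpr hlt
    have hδδ : δ < δ / (cseq r (n+1) / cseq r n) := by
      rw [lt_div_iff₀ (div_pos hc' hc)]
      nlinarith
    obtain ⟨v, hvV, hvd⟩ := (Metric.infDist_lt_iff hVne).mp (lt_of_eq_of_lt hδ.symm hδδ)
    set e := x n - v with he
    have hne : ‖e‖ < δ / (cseq r (n+1) / cseq r n) := by
      rwa [he, ← dist_eq_norm]
    -- key estimate
    have hkey : ∀ z ∈ V, cseq r (n+1) * ‖e‖ ≤ cseq r n * ‖e + z‖ := by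
      intro z hz
      have h1 : δ ≤ ‖e + z‖ := by
        have : e + z = x n - (v - z) := by rw [he]; abel
        rw [this, ← dist_eq_norm]
        exact Metric.infDist_le_dist_of_mem (V.sub_mem hvV hz)
      have h2 : cseq r (n+1) * ‖e‖ < cseq r n * δ := by
        have := (lt_div_iff₀ (div_pos hc' hc)).mp hne
        calc cseq r (n+1) * ‖e‖ = cseq r n * (‖e‖ * (cseq r (n+1) / cseq r n)) := by
              field_simp
        _ < cseq r n * δ := by
              have := mul_pos hc' hc
              nlinarith [hc, (lt_div_iff₀ (div_pos hc' hc)).mp hne]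
      nlinarith [h1, hc]
    refine ⟨e, ?_, ?_⟩
    · intro w hw a
      rw [sum_snoc_eq]
      set u := ∑ i : Fin n, a i.castSucc • f i with hu
      set b := a (Fin.last n) with hb
      have huV : u ∈ V :=
        Submodule.mem_sup_right (Submodule.sum_mem _ (fun i _ =>
          Submodule.smul_mem _ _ (Submodule.subset_span ⟨i, rfl⟩)))
      have hwV : w ∈ V := Submodule.mem_sup_left hw
      have hcle1 := cseq_le_one hr0 hr1 n
      by_cases hb0 : b = 0
      · simp only [hb0, zero_smul, add_zero]
        calc cseq r (n+1) * max ‖w‖ ‖u‖ ≤ cseq r n * max ‖w‖ ‖u‖ := by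
              have : (0:ℝ) ≤ max ‖w‖ ‖u‖ := le_max_of_le_left (norm_nonneg w)
              nlinarith
          _ ≤ ‖w + u‖ := h.1 w hw _
      · set S := ‖b • e + (w + u)‖ with hS
        have hS0 : 0 ≤ S := norm_nonneg _
        have hassoc : w + (u + b • e) = b • e + (w + u) := by abel
        have hz : b⁻¹ • (w + u) ∈ V := V.smul_mem _ (V.add_mem hwV huV)
        have h1 : cseq r (n+1) * ‖b • e‖ ≤ cseq r n * S := by
          have hk := hkey _ hz
          have heq : b • (e + b⁻¹ • (w + u)) = b • e + (w + u) := by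
            rw [smul_add, smul_inv_smul₀ hb0]
          calc cseq r (n+1) * ‖b • e‖ = ‖b‖ * (cseq r (n+1) * ‖e‖) := by
                rw [norm_smul]; ring
            _ ≤ ‖b‖ * (cseq r n * ‖e + b⁻¹ • (w + u)‖) :=
                mul_le_mul_of_nonneg_left hk (norm_nonneg b)
            _ = cseq r n * ‖b • (e + b⁻¹ • (w + u))‖ := by rw [norm_smul]; ring
            _ = cseq r n * S := by rw [heq]
        have h2 : cseq r (n+1) * ‖w + u‖ ≤ cseq r n * S := by
          have hm : ‖w + u‖ ≤ max S ‖b • e‖ := by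
            have := norm_sub_le_max' (b • e + (w + u)) (b • e)
            simpa using this
          rcases le_max_iff.mp hm with hm | hm
          · nlinarith
          · nlinarith [mul_le_mul_of_nonneg_left hm hc'.le]
        have hInv : cseq r n * max ‖w‖ ‖u‖ ≤ ‖w + u‖ := h.1 w hw _
        have h3 : cseq r (n+1) * max ‖w‖ ‖u‖ ≤ S := by
          nlinarith [mul_le_mul_of_nonneg_left hInv hc'.le,
            (le_max_of_le_left (norm_nonneg w) : (0:ℝ) ≤ max ‖w‖ ‖u‖)]
        have hw' : cseq r (n+1) * ‖w‖ ≤ S :=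
          le_trans (mul_le_mul_of_nonneg_left (le_max_left _ _) hc'.le) h3
        have hu' : cseq r (n+1) * ‖u‖ ≤ S :=
          le_trans (mul_le_mul_of_nonneg_left (le_max_right _ _) hc'.le) h3
        have hbe' : cseq r (n+1) * ‖b • e‖ ≤ S := by nlinarith
        have hsum : cseq r (n+1) * ‖u + b • e‖ ≤ S := by
          refine le_trans (mul_le_mul_of_nonneg_left
            (IsUltrametricDist.norm_add_le_max u (b • e)) hc'.le) ?_
          exact mul_max_le hc'.le hu' hbe'
        have hgoal : ‖w + (u + b • e)‖ = S := by rw [hassoc]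
        rw [hgoal]
        exact mul_max_le hc'.le hw' hsum
    · intro i
      refine Fin.lastCases ?_ (fun i => hmem2 e i) i
      simp only [Fin.val_last]
      have hxv : x n = v + e := by rw [he]; abel
      have hvm : v ∈ (W ⊔ Submodule.span K (Set.range (Fin.snoc f e)) : Submodule K G) :=
        (sup_le_sup_left (Submodule.span_mono (range_snoc_subset f e)) W) hvV
      have hem : e ∈ (W ⊔ Submodule.span K (Set.range (Fin.snoc f e)) : Submodule K G) := by
        refine Submodule.mem_sup_right (Submodule.subset_span ⟨Fin.last n, ?_⟩)
        simp [Fin.snoc_last]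
      rw [hxv]
      exact subset_closure (Submodule.add_mem _ hvm hem)

noncomputable def orthChain (W : Submodule K G) {r : ℝ} (hr0 : 0 < r) (hr1 : r < 1)
    (x : ℕ → G) : ∀ n, {f : Fin n → G // OrthInv W r x n f}
  | 0 => ⟨Fin.elim0, orthInv_zero W hr0 hr1 x⟩
  | n+1 =>
    ⟨Fin.snoc (orthChain W hr0 hr1 x n).1
        (orthInv_step W hr0 hr1 x n _ (orthChain W hr0 hr1 x n).2).choose,
      (orthInv_step W hr0 hr1 x n _ (orthChain W hr0 hr1 x n).2).choose_spec⟩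

noncomputable def orthSeq (W : Submodule K G) {r : ℝ} (hr0 : 0 < r) (hr1 : r < 1)
    (x : ℕ → G) : ℕ → G :=
  fun n => (orthChain W hr0 hr1 x (n+1)).1 (Fin.last n)

lemma orthChain_apply (W : Submodule K G) {r : ℝ} (hr0 : 0 < r) (hr1 : r < 1)
    (x : ℕ → G) : ∀ n (i : Fin n), (orthChain W hr0 hr1 x n).1 i = orthSeq W hr0 hr1 x i := by
  intro n
  induction n with
  | zero => exact fun i => i.elim0
  | succ n ih =>
    intro i
    refine Fin.lastCases ?_ ?_ i
    · rfl
    · intro i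
      show (orthChain W hr0 hr1 x (n+1)).1 i.castSucc = _
      rw [orthChain]
      simp only [Fin.snoc_castSucc]
      rw [ih i]
      simp

lemma exists_orthComplement [CompleteSpace G] (W : Submodule K G) (hW : IsClosed (W : Set G))
    (hgen : ∃ s : Set G, s.Countable ∧ Dense ((Submodule.span K s : Submodule K G) : Set G))
    {r : ℝ} (hr0 : 0 < r) (hr1 : r < 1) :
    ∃ W' : Submodule K G, IsClosed (W' : Set G) ∧
      (∀ w ∈ W, ∀ u ∈ W', r * max ‖w‖ ‖u‖ ≤ ‖w + u‖) ∧ W ⊓ W' = ⊥ ∧ W ⊔ W' = ⊤ := by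
  classical
  obtain ⟨s, hsc, hsd⟩ := hgen
  obtain ⟨x, hsx⟩ : ∃ x : ℕ → G, s ⊆ Set.range x := by
    rcases s.eq_empty_or_nonempty with rfl | hne
    · exact ⟨fun _ => 0, by simp⟩
    · obtain ⟨x, rfl⟩ := hsc.exists_eq_range hne
      exact ⟨x, subset_rfl⟩
  set e : ℕ → G := orthSeq W hr0 hr1 x with he
  set W' : Submodule K G := (Submodule.span K (Set.range e)).topologicalClosure with hW'
  have hW'c : IsClosed (W' : Set G) := Submodule.isClosed_topologicalClosure _
  have horth0 : ∀ w ∈ W, ∀ u ∈ Submodule.span K (Set.range e),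
      r * max ‖w‖ ‖u‖ ≤ ‖w + u‖ := by
    intro w hw u hu
    obtain ⟨cf, hcf⟩ := Finsupp.mem_span_range_iff_exists_finsupp.mp hu
    set n := (cf.support.sup id) + 1 with hn
    have hsub : cf.support ⊆ Finset.range n := by
      intro i hi
      simp only [Finset.mem_range, hn]
      exact Nat.lt_succ_of_le (Finset.le_sup (f := id) hi)
    have hu2 : u = ∑ i : Fin n, cf i • e (i : ℕ) := by
      rw [← hcf, Finsupp.sum]
      rw [Finset.sum_subset hsub (fun i _ hi => by
        simp [Finsupp.notMem_support_iff.mp hi])]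
      rw [← Fin.sum_univ_eq_sum_range (fun i => cf i • e i) n]
    have hInv := (orthChain W hr0 hr1 x n).2.1 w hw (fun i => cf (i : ℕ))
    have hsum : ∑ i : Fin n, cf (i : ℕ) • (orthChain W hr0 hr1 x n).1 i
        = ∑ i : Fin n, cf (i : ℕ) • e (i : ℕ) := by
      refine Finset.sum_congr rfl fun i _ => ?_
      rw [orthChain_apply]
    rw [hsum] at hInv
    rw [hu2]
    refine le_trans ?_ hInv
    have hmax : (0:ℝ) ≤ max ‖w‖ ‖∑ i : Fin n, cf (i : ℕ) • e (i : ℕ)‖ :=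
      le_max_of_le_left (norm_nonneg w)
    have := (cseq_gt hr0 hr1 n).le
    nlinarith
  have horth : ∀ w ∈ W, ∀ u ∈ W', r * max ‖w‖ ‖u‖ ≤ ‖w + u‖ := by
    intro w hw u hu
    have hucl : u ∈ closure ((Submodule.span K (Set.range e) : Submodule K G) : Set G) := by
      rwa [← Submodule.topologicalClosure_coe]
    have hPc : IsClosed {u : G | r * max ‖w‖ ‖u‖ ≤ ‖w + u‖} := by
      refine isClosed_le ?_ ?_
      · exact continuous_const.mul (continuous_const.max continuous_norm)
      · exact (continuous_const.add continuous_id).norm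
    exact closure_minimal (fun v hv => horth0 w hw v hv) hPc hucl
  have hdisj : W ⊓ W' = ⊥ := by
    rw [eq_bot_iff]
    rintro y hy
    obtain ⟨hy1, hy2⟩ := Submodule.mem_inf.mp hy
    have h0 := horth (-y) (W.neg_mem hy1) y hy2
    simp only [neg_add_cancel, norm_zero, norm_neg, max_self] at h0
    have : ‖y‖ = 0 := le_antisymm (by nlinarith) (norm_nonneg y)
    simpa [Submodule.mem_bot] using norm_eq_zero.mp this
  have hsum_closed : IsClosed ((W ⊔ W' : Submodule K G) : Set G) := by
    refine isClosed_of_closure_subset ?_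
    intro z hz
    obtain ⟨y, hy, hyz⟩ := mem_closure_iff_seq_limit.mp hz
    choose wk hwk uk huk hyk using fun k => Submodule.mem_sup.mp (hy k)
    have hyc : CauchySeq y := hyz.cauchySeq
    have key : ∀ m k, r * dist (wk m) (wk k) ≤ dist (y m) (y k) ∧
        r * dist (uk m) (uk k) ≤ dist (y m) (y k) := by
      intro m k
      have h1 := horth (wk m - wk k) (W.sub_mem (hwk m) (hwk k))
        (uk m - uk k) (W'.sub_mem (huk m) (huk k))
      have h2 : (wk m - wk k) + (uk m - uk k) = y m - y k := by
        rw [← hyk m, ← hyk k]; abel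
      rw [h2] at h1
      rw [dist_eq_norm, dist_eq_norm, dist_eq_norm]
      constructor
      · refine le_trans ?_ h1
        exact mul_le_mul_of_nonneg_left (le_max_left _ _) hr0.le
      · refine le_trans ?_ h1
        exact mul_le_mul_of_nonneg_left (le_max_right _ _) hr0.le
    have hwc : CauchySeq wk := by
      rw [Metric.cauchySeq_iff] at hyc ⊢
      intro ε hε
      obtain ⟨N, hN⟩ := hyc (r * ε) (by positivity)
      refine ⟨N, fun m hm k hk => ?_⟩
      have := (key m k).1
      have := hN m hm k hk
      nlinarith [dist_nonneg (x := wk m) (y := wk k)]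
    have huc : CauchySeq uk := by
      rw [Metric.cauchySeq_iff] at hyc ⊢
      intro ε hε
      obtain ⟨N, hN⟩ := hyc (r * ε) (by positivity)
      refine ⟨N, fun m hm k hk => ?_⟩
      have := (key m k).2
      have := hN m hm k hk
      nlinarith [dist_nonneg (x := uk m) (y := uk k)]
    obtain ⟨wl, hwl⟩ := cauchySeq_tendsto_of_complete hwc
    obtain ⟨ul, hul⟩ := cauchySeq_tendsto_of_complete huc
    have hwlW : wl ∈ W := hW.mem_of_tendsto hwl (Filter.Eventually.of_forall hwk)
    have hulW : ul ∈ W' := hW'c.mem_of_tendsto hul (Filter.Eventually.of_forall huk)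
    have hly : Filter.Tendsto y Filter.atTop (nhds (wl + ul)) := by
      have : (fun k => wk k + uk k) = y := funext hyk
      rw [← this]
      exact hwl.add hul
    have hzeq : z = wl + ul := tendsto_nhds_unique hyz hly
    rw [hzeq]
    exact Submodule.add_mem _ (Submodule.mem_sup_left hwlW) (Submodule.mem_sup_right hulW)
  have htop : W ⊔ W' = ⊤ := by
    have hxmem : ∀ k, x k ∈ closure ((W ⊔ W' : Submodule K G) : Set G) := by
      intro k
      have h1 := (orthChain W hr0 hr1 x (k+1)).2.2 (Fin.last k)
      simp only [Fin.val_last] at h1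
      refine closure_mono ?_ h1
      refine SetLike.coe_subset_coe.mpr (sup_le_sup_left ?_ W)
      refine le_trans (Submodule.span_le.mpr ?_) (Submodule.le_topologicalClosure _)
      rintro - ⟨i, rfl⟩
      exact Submodule.subset_span ⟨(i : ℕ), (orthChain_apply W hr0 hr1 x (k+1) i).symm⟩
    have hs1 : s ⊆ ((W ⊔ W' : Submodule K G) : Set G) := by
      intro p hp
      obtain ⟨k, rfl⟩ := hsx hp
      exact hsum_closed.closure_eq ▸ hxmem k
    have hsp : (Submodule.span K s : Set G) ⊆ ((W ⊔ W' : Submodule K G) : Set G) :=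
      Submodule.span_le.mpr hs1
    have : (((W ⊔ W' : Submodule K G)) : Set G) = Set.univ := by
      apply Set.eq_univ_of_univ_subset
      calc Set.univ = closure ((Submodule.span K s : Submodule K G) : Set G) :=
            hsd.closure_eq.symm
      _ ⊆ closure ((W ⊔ W' : Submodule K G) : Set G) := closure_mono hsp
      _ = _ := hsum_closed.closure_eq
    refine Submodule.eq_top_iff'.mpr fun p => ?_
    have hp : p ∈ ((W ⊔ W' : Submodule K G) : Set G) := this ▸ Set.mem_univ p
    exact hp
  exact ⟨W', hW'c, horth, hdisj, htop⟩

end Aux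


open Classical in
/-- The boundary depth `β(C,d) ∈ [0,∞]` of a norm-nonincreasing differential `d` on a
nonarchimedean normed chain complex `C`. -/
noncomputable def boundaryDepth {C : Type*} [NormedAddCommGroup C] (d : C → C) : ℝ≥0∞ :=
  if ∀ x, d x = 0 then 0
  else
    ⨆ x ∈ {x : C | x ≠ 0 ∧ ∃ y, d y = x},
      ⨅ y ∈ {y : C | d y = x}, ENNReal.ofReal (Real.log ‖y‖ - Real.log ‖x‖)

/-- Let `(G,d)` be a countably generated nonarchimedean normed chain
complex over `K` with finite boundary depth `β`. Then for every `r ∈ (0,1)` there is an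
`r`-orthogonal decomposition `G = D ⊕ B ⊕ C` into closed subspaces with
`ker d = B ⊕ C`, `B = d(D) = range d`, `d` injective on `D`, and the induced inverse
`d⁻¹ : B → D` bounded by `(1/r)·e^β`. -/
theorem exists_rOrthogonal_decomposition
    {K : Type*} [NormedField K] [IsUltrametricDist K] [CompleteSpace K]
    {G : Type*} [NormedAddCommGroup G] [NormedSpace K G] [CompleteSpace G]
    [IsUltrametricDist G]
    (hgen : ∃ s : Set G, s.Countable ∧ Dense ((Submodule.span K s : Submodule K G) : Set G))
    (d : G →L[K] G) (hd2 : ∀ x, d (d x) = 0) (hd1 : ∀ x, ‖d x‖ ≤ ‖x‖)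
    (β : ℝ) (hβ0 : 0 ≤ β) (hβ : boundaryDepth (fun x => d x) = ENNReal.ofReal β) :
    ∀ r : ℝ, 0 < r → r < 1 →
      ∃ D B C : Submodule K G,
        IsClosed (D : Set G) ∧ IsClosed (B : Set G) ∧ IsClosed (C : Set G) ∧
        (∀ x : G, ∃! t : ↥D × ↥B × ↥C, x = (t.1 : G) + (t.2.1 : G) + (t.2.2 : G)) ∧
        (∀ (xd : ↥D) (xb : ↥B) (xc : ↥C),
          r * max ‖(xd : G)‖ (max ‖(xb : G)‖ ‖(xc : G)‖) ≤
            ‖(xd : G) + (xb : G) + (xc : G)‖) ∧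
        LinearMap.ker (d : G →ₗ[K] G) = B ⊔ C ∧
        LinearMap.range (d : G →ₗ[K] G) = B ∧
        (B : Set G) = ⇑d '' (D : Set G) ∧
        (∀ x ∈ D, ∀ y ∈ D, d x = d y → x = y) ∧
        (∀ x ∈ D, ‖x‖ ≤ (1 / r) * Real.exp β * ‖d x‖) := by
  intro r hr0 hr1
  classical
  by_cases hd0 : ∀ z : G, d z = 0
  · refine ⟨⊥, ⊥, ⊤, ?_, ?_, ?_, ?_, ?_, ?_, ?_, ?_, ?_, ?_⟩
    · simp only [Submodule.bot_coe]; exact isClosed_singleton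
    · simp only [Submodule.bot_coe]; exact isClosed_singleton
    · simp only [Submodule.top_coe]; exact isClosed_univ
    · intro z
      refine ⟨⟨0, 0, ⟨z, trivial⟩⟩, by simp, ?_⟩
      rintro ⟨p, b, c⟩ hpbc
      have hp : (p : G) = 0 := (Submodule.mem_bot K).mp p.2
      have hb : (b : G) = 0 := (Submodule.mem_bot K).mp b.2
      simp only [hp, hb, zero_add] at hpbc
      refine Prod.ext (Subtype.ext ?_) (Prod.ext (Subtype.ext ?_) (Subtype.ext ?_))
      · exact hp
      · exact hb
      · exact hpbc.symm
    · intro xd xb xc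
      have hd' : (xd : G) = 0 := (Submodule.mem_bot K).mp xd.2
      have hb' : (xb : G) = 0 := (Submodule.mem_bot K).mp xb.2
      simp only [hd', hb', norm_zero, zero_add]
      rw [max_eq_right (norm_nonneg _), max_eq_right (norm_nonneg _)]
      nlinarith [norm_nonneg (xc : G)]
    · have h1 : LinearMap.ker (d : G →ₗ[K] G) = (⊤ : Submodule K G) :=
        Submodule.eq_top_iff'.mpr fun z => LinearMap.mem_ker.mpr (hd0 z)
      rw [h1, bot_sup_eq]
    · rw [eq_bot_iff]
      rintro y ⟨z, rfl⟩
      simp [hd0 z]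
    · ext y
      simp only [Submodule.bot_coe, Set.mem_singleton_iff, Set.mem_image]
      constructor
      · rintro rfl; exact ⟨0, rfl, map_zero d⟩
      · rintro ⟨w, rfl, rfl⟩; exact hd0 0
    · intro p hp q hq _
      rw [(Submodule.mem_bot K).mp hp, (Submodule.mem_bot K).mp hq]
    · intro p hp
      rw [(Submodule.mem_bot K).mp hp]
      simp only [norm_zero, map_zero]
      positivity
  · set ρ := Real.sqrt r with hρdef
    have hρ0 : 0 < ρ := Real.sqrt_pos.mpr hr0
    have hρρ : ρ * ρ = r := Real.mul_self_sqrt hr0.le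
    have hρ1 : ρ < 1 := by nlinarith
    have hrρ : r ≤ ρ := by nlinarith
    rw [boundaryDepth, if_neg hd0] at hβ
    have hbound : ∀ z : G, d z ≠ 0 → ∀ ε : ℝ, 0 < ε →
        ∃ y : G, d y = d z ∧ ‖y‖ < Real.exp (β + ε) * ‖d z‖ := by
      intro z hz ε hε
      have hmem : d z ∈ {x : G | x ≠ 0 ∧ ∃ y, d y = x} := ⟨hz, z, rfl⟩
      have hle : (⨅ y ∈ {y : G | d y = d z},
          ENNReal.ofReal (Real.log ‖y‖ - Real.log ‖d z‖)) ≤ ENNReal.ofReal β := by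
        rw [← hβ]
        exact le_iSup₂ (f := fun x _ => ⨅ y ∈ {y : G | d y = x},
          ENNReal.ofReal (Real.log ‖y‖ - Real.log ‖x‖)) (d z) hmem
      have hlt : (⨅ y ∈ {y : G | d y = d z},
          ENNReal.ofReal (Real.log ‖y‖ - Real.log ‖d z‖)) < ENNReal.ofReal (β + ε) :=
        lt_of_le_of_lt hle ((ENNReal.ofReal_lt_ofReal_iff (by linarith)).mpr (by linarith))
      obtain ⟨y, hy⟩ := iInf_lt_iff.mp hlt
      obtain ⟨hyd, hylt⟩ := iInf_lt_iff.mp hy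
      have hy0 : y ≠ 0 := fun h => hz (by rw [← hyd, h, map_zero])
      have hlog : Real.log ‖y‖ - Real.log ‖d z‖ < β + ε :=
        (ENNReal.ofReal_lt_ofReal_iff (by linarith)).mp hylt
      have hdz0 : 0 < ‖d z‖ := norm_pos_iff.mpr hz
      have hy0' : 0 < ‖y‖ := norm_pos_iff.mpr hy0
      refine ⟨y, hyd, ?_⟩
      have h2 := Real.exp_lt_exp.mpr (by linarith : Real.log ‖y‖ < β + ε + Real.log ‖d z‖)
      rwa [Real.exp_log hy0', Real.exp_add, Real.exp_log hdz0] at h2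
    obtain ⟨D, hDc, orth1, hKDinf, hKDsup⟩ :=
      exists_orthComplement (LinearMap.ker (d : G →ₗ[K] G)) (ContinuousLinearMap.isClosed_ker d) hgen hρ0 hρ1
    have hDbound : ∀ p, p ∈ D → ρ * ‖p‖ ≤ Real.exp β * ‖d p‖ := by
      intro p hp
      by_cases hdp : d p = 0
      · have hm : p ∈ LinearMap.ker (d : G →ₗ[K] G) ⊓ D := ⟨LinearMap.mem_ker.mpr hdp, hp⟩
        rw [hKDinf] at hm
        rw [(Submodule.mem_bot K).mp hm]
        simp only [norm_zero, map_zero, mul_zero]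
        positivity
      · by_contra hcon
        push_neg at hcon
        have hdp0 : 0 < ‖d p‖ := norm_pos_iff.mpr hdp
        have hexpb := Real.exp_pos β
        have hp0 : 0 < ‖p‖ := by nlinarith [norm_nonneg p]
        set q : ℝ := ρ * ‖p‖ / (Real.exp β * ‖d p‖) with hqdef
        have hq1 : 1 < q := (one_lt_div (by positivity)).mpr hcon
        have hε : 0 < Real.log q := Real.log_pos hq1
        obtain ⟨y, hyd, hylt⟩ := hbound p hdp (Real.log q) hε
        have hexp : Real.exp (β + Real.log q) * ‖d p‖ = ρ * ‖p‖ := by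
          rw [Real.exp_add, Real.exp_log (by positivity), hqdef]
          field_simp
        rw [hexp] at hylt
        have hyk : y - p ∈ LinearMap.ker (d : G →ₗ[K] G) :=
          LinearMap.mem_ker.mpr (by rw [map_sub, ContinuousLinearMap.coe_coe, hyd, sub_self])
        have horth := orth1 (y - p) hyk p hp
        rw [sub_add_cancel] at horth
        nlinarith [mul_le_mul_of_nonneg_left (le_max_right ‖y - p‖ ‖p‖) hρ0.le]
    set B : Submodule K G := LinearMap.range (d : G →ₗ[K] G) with hBdef
    have hBKd : B ≤ LinearMap.ker (d : G →ₗ[K] G) := by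
      rintro b ⟨z, rfl⟩
      exact LinearMap.mem_ker.mpr (hd2 z)
    have hBD : (B : Set G) = ⇑d '' (D : Set G) := by
      apply Set.Subset.antisymm
      · rintro b ⟨z, rfl⟩
        have hz : z ∈ LinearMap.ker (d : G →ₗ[K] G) ⊔ D := hKDsup ▸ Submodule.mem_top
        obtain ⟨k, hk, p, hp, hkp⟩ := Submodule.mem_sup.mp hz
        refine ⟨p, hp, ?_⟩
        rw [← hkp, map_add, LinearMap.mem_ker.mp hk, zero_add, ContinuousLinearMap.coe_coe]
      · rintro - ⟨p, hp, rfl⟩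
        exact ⟨p, rfl⟩
    have hBclosed : IsClosed (B : Set G) := by
      refine isClosed_of_closure_subset ?_
      intro b hb
      obtain ⟨y, hy, hyb⟩ := mem_closure_iff_seq_limit.mp hb
      have himg : ∀ k, ∃ p, p ∈ D ∧ d p = y k := by
        intro k
        have h3 : y k ∈ ⇑d '' (D : Set G) := by rw [← hBD]; exact hy k
        obtain ⟨p, hp1, hp2⟩ := h3
        exact ⟨p, hp1, hp2⟩
      choose p hpD hpd using himg
      have hyc : CauchySeq y := hyb.cauchySeq
      have hexpb := Real.exp_pos β
      have hpc : CauchySeq p := by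
        rw [Metric.cauchySeq_iff] at hyc ⊢
        intro ε hε
        obtain ⟨N, hN⟩ := hyc (ρ * ε / Real.exp β) (by positivity)
        refine ⟨N, fun m hm k hk => ?_⟩
        have hsub : p m - p k ∈ D := D.sub_mem (hpD m) (hpD k)
        have h1 := hDbound _ hsub
        have h2 : d (p m - p k) = y m - y k := by rw [map_sub, hpd, hpd]
        rw [h2] at h1
        have h3 := hN m hm k hk
        rw [dist_eq_norm] at h3 ⊢
        have h4 : Real.exp β * (ρ * ε / Real.exp β) = ρ * ε := by field_simp
        nlinarith [norm_nonneg (y m - y k)]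
      obtain ⟨pl, hpl⟩ := cauchySeq_tendsto_of_complete hpc
      have hplD : pl ∈ D := hDc.mem_of_tendsto hpl (Filter.Eventually.of_forall hpD)
      have hdp : Filter.Tendsto (fun k => d (p k)) Filter.atTop (nhds (d pl)) :=
        (d.continuous.tendsto pl).comp hpl
      have hyd : Filter.Tendsto y Filter.atTop (nhds (d pl)) := by
        have : (fun k => d (p k)) = y := funext hpd
        rwa [this] at hdp
      have hbe : b = d pl := tendsto_nhds_unique hyb hyd
      exact hbe ▸ ⟨pl, rfl⟩
    obtain ⟨E, hEc, orth2, hBEinf, hBEsup⟩ := exists_orthComplement B hBclosed hgen hρ0 hρ1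
    set C : Submodule K G := E ⊓ LinearMap.ker (d : G →ₗ[K] G) with hCdef
    have hCc : IsClosed (C : Set G) := by
      have h1 : (C : Set G) = (E : Set G) ∩ (LinearMap.ker (d : G →ₗ[K] G) : Set G) := rfl
      rw [h1]
      exact hEc.inter (ContinuousLinearMap.isClosed_ker d)
    have hCE : C ≤ E := inf_le_left
    have hCKd : C ≤ LinearMap.ker (d : G →ₗ[K] G) := inf_le_right
    have hker : LinearMap.ker (d : G →ₗ[K] G) = B ⊔ C := by
      apply le_antisymm
      · intro k hk
        have h1 : k ∈ B ⊔ E := hBEsup ▸ Submodule.mem_top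
        obtain ⟨b, hb, u, hu, hbu⟩ := Submodule.mem_sup.mp h1
        have huk : u ∈ LinearMap.ker (d : G →ₗ[K] G) := by
          have h2 : u = k - b := by rw [← hbu]; abel
          rw [h2]
          exact Submodule.sub_mem _ hk (hBKd hb)
        rw [← hbu]
        exact Submodule.add_mem _ (Submodule.mem_sup_left hb)
          (Submodule.mem_sup_right ⟨hu, huk⟩)
      · exact sup_le hBKd hCKd
    refine ⟨D, B, C, hDc, hBclosed, hCc, ?_, ?_, hker, rfl, hBD, ?_, ?_⟩
    · intro z
      have hz : z ∈ LinearMap.ker (d : G →ₗ[K] G) ⊔ D := hKDsup ▸ Submodule.mem_top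
      obtain ⟨k, hk, p, hp, hkp⟩ := Submodule.mem_sup.mp hz
      rw [hker] at hk
      obtain ⟨b, hb, c, hc, hbc⟩ := Submodule.mem_sup.mp hk
      refine ⟨⟨⟨p, hp⟩, ⟨b, hb⟩, ⟨c, hc⟩⟩, ?_, ?_⟩
      · show z = p + b + c
        rw [← hkp, ← hbc]; abel
      · rintro ⟨⟨p', hp'⟩, ⟨b', hb'⟩, ⟨c', hc'⟩⟩ hz'
        simp only at hz'
        have hsum : p' + b' + c' = p + b + c := by
          rw [← hz', ← hkp, ← hbc]; abel
        have hpp : p' - p ∈ D := D.sub_mem hp' hp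
        have h5 : p' - p = b + c - (b' + c') := by
          refine sub_eq_sub_iff_add_eq_add.mpr ?_
          calc p' + (b' + c') = p' + b' + c' := by abel
            _ = p + b + c := hsum
            _ = b + c + p := by abel
        have hppk : p' - p ∈ LinearMap.ker (d : G →ₗ[K] G) := by
          rw [h5]
          exact Submodule.sub_mem _
            (Submodule.add_mem _ (hBKd hb) (hCKd hc))
            (Submodule.add_mem _ (hBKd hb') (hCKd hc'))
        have h6 : p' - p ∈ LinearMap.ker (d : G →ₗ[K] G) ⊓ D := ⟨hppk, hpp⟩
        rw [hKDinf] at h6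
        have hpe : p' = p := by
          have h7 := (Submodule.mem_bot K).mp h6
          rwa [sub_eq_zero] at h7
        have h8 : b' - b = c - c' := by
          refine sub_eq_sub_iff_add_eq_add.mpr ?_
          have := hsum
          rw [hpe] at this
          calc b' + c' = p + b' + c' - p := by abel
            _ = p + b + c - p := by rw [show p + b' + c' = p + b + c from this]
            _ = c + b := by abel
        have h9 : b' - b ∈ B ⊓ E := by
          refine ⟨B.sub_mem hb' hb, ?_⟩
          rw [h8]
          exact E.sub_mem (hCE hc) (hCE hc')
        rw [hBEinf] at h9
        have hbe : b' = b := by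
          have h10 := (Submodule.mem_bot K).mp h9
          rwa [sub_eq_zero] at h10
        have hce : c' = c := by
          have h11 : c - c' = 0 := by rw [← h8, hbe, sub_self]
          have h12 := sub_eq_zero.mp h11
          exact h12.symm
        exact Prod.ext (Subtype.ext hpe) (Prod.ext (Subtype.ext hbe) (Subtype.ext hce))
    · intro xd xb xc
      have hk : (xb : G) + (xc : G) ∈ LinearMap.ker (d : G →ₗ[K] G) :=
        Submodule.add_mem _ (hBKd xb.2) (hCKd xc.2)
      have h1 := orth1 _ hk (xd : G) xd.2
      have h2 := orth2 (xb : G) xb.2 (xc : G) (hCE xc.2)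
      have hre : (xb : G) + (xc : G) + (xd : G) = (xd : G) + (xb : G) + (xc : G) := by abel
      rw [hre] at h1
      have hS0 := norm_nonneg ((xd : G) + (xb : G) + (xc : G))
      have hmax1 : ρ * ‖(xd : G)‖ ≤ ‖(xd : G) + (xb : G) + (xc : G)‖ :=
        le_trans (mul_le_mul_of_nonneg_left (le_max_right _ _) hρ0.le) h1
      have hmax2 : ρ * ‖(xb : G) + (xc : G)‖ ≤ ‖(xd : G) + (xb : G) + (xc : G)‖ :=
        le_trans (mul_le_mul_of_nonneg_left (le_max_left _ _) hρ0.le) h1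
      refine mul_max_le hr0.le ?_ ?_
      · nlinarith [norm_nonneg (xd : G)]
      · have h3 : ρ * (ρ * max ‖(xb : G)‖ ‖(xc : G)‖) ≤ ρ * ‖(xb : G) + (xc : G)‖ :=
          mul_le_mul_of_nonneg_left h2 hρ0.le
        calc r * max ‖(xb : G)‖ ‖(xc : G)‖ = ρ * (ρ * max ‖(xb : G)‖ ‖(xc : G)‖) := by
              rw [← hρρ]; ring
          _ ≤ ρ * ‖(xb : G) + (xc : G)‖ := h3
          _ ≤ _ := hmax2
    · intro p hp q hq hpq
      have h1 : p - q ∈ LinearMap.ker (d : G →ₗ[K] G) ⊓ D :=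
        ⟨LinearMap.mem_ker.mpr (by rw [map_sub, ContinuousLinearMap.coe_coe, hpq, sub_self]), D.sub_mem hp hq⟩
      rw [hKDinf] at h1
      have h2 := (Submodule.mem_bot K).mp h1
      rwa [sub_eq_zero] at h2
    · intro p hp
      have h1 := hDbound p hp
      have hexpb := Real.exp_pos β
      have h2 : r * (1 / r * Real.exp β * ‖d p‖) = Real.exp β * ‖d p‖ := by
        field_simp
      nlinarith [norm_nonneg p, norm_nonneg (d p)]
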